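/- Let d ∈ ℕ and θ = (θ₁,…,θ_d) with each θ_k > 0. For a multi-index n = (n₁,…,n_d) ∈ ℕ₀^d define φ̃_{θ,n}(x) := ∏_{k=1}^d (2^{n_k}/n_k!)^{1/2} (θ_k x_k)^{n_k} e^{−θ_k² x_k²} for x ∈ ℝ^d. Then for every τ ∈ (0,1) and every x ∈ ℝ^d the family (φ̃_{θ,n}(x))_{n∈ℕ₀^d} is absolutely summable and ∑_{n∈ℕ₀^d} |φ̃_{θ,n}(x)| ≤ ∏_{k=1}^d (1 − τ²)^{−1} e^{(2τ^{−2} − 1)θ_k² x_k²} < ∞. In particular the expansion functions of the d-dimensional Gaussian kernel G_θ(x,y) = e^{−∑_k θ_k²(x_k−y_k)²} = ∑_{n∈ℕ₀^d} φ̃_{θ,n}(x)φ̃_{θ,n}(y) satisfy condition (C-1*) on any subset of ℝ^d. -/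

import Mathlib

open Real

set_option maxHeartbeats 1000000 in
private lemma hasSum_pi_prod : ∀ {d : ℕ} (f : Fin d → ℕ → ℝ) (S : Fin d → ℝ),
    (∀ k m, 0 ≤ f k m) → (∀ k, HasSum (f k) (S k)) →
    HasSum (fun n : Fin d → ℕ => ∏ k, f k (n k)) (∏ k, S k) := by
  intro d
  induction d with
  | zero =>
      intro f S _ _
      simp only [Finset.univ_eq_empty, Finset.prod_empty]
      exact hasSum_single (f := fun _ : Fin 0 → ℕ => (1 : ℝ)) default
        (fun b hb => absurd (Subsingleton.elim b default) hb)
  | succ d ih =>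
      intro f S hnn h
      have h0 := h 0
      have hrest : HasSum (fun n : Fin d → ℕ => ∏ k : Fin d, f k.succ (n k)) (∏ k : Fin d, S k.succ) :=
        ih (fun k => f k.succ) (fun k => S k.succ) (fun k m => hnn _ m) (fun k => h _)
      have hs : Summable (fun p : ℕ × (Fin d → ℕ) => f 0 p.1 * ∏ k : Fin d, f k.succ (p.2 k)) :=
by
        apply Summable.mul_of_nonneg h0.summable hrest.summable
        · intro m; exact hnn 0 m
        · intro n; exact Finset.prod_nonneg fun k _ => hnn _ _
      have hmul := h0.mul hrest hs
      rw [Fin.prod_univ_succ]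
      apply (Equiv.hasSum_iff (Fin.consEquiv fun _ : Fin (d+1) => ℕ)).mp
      have hc : ((fun n : Fin (d+1) → ℕ => ∏ k, f k (n k)) ∘
          (Fin.consEquiv fun _ : Fin (d+1) => ℕ))
          = fun p : ℕ × (Fin d → ℕ) => f 0 p.1 * ∏ k : Fin d, f k.succ (p.2 k) := by
        funext p
        simp [Fin.consEquiv, Fin.prod_univ_succ]
      rw [hc]
      exact hmul

private lemma oneD (t τ : ℝ) (hτ0 : 0 < τ) (hτ1 : τ < 1) :
    Summable (fun m : ℕ => |Real.sqrt ((2 : ℝ) ^ m / (Nat.factorial m : ℝ)) *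
        t ^ m * Real.exp (-t ^ 2)|) ∧
    ∑' m : ℕ, |Real.sqrt ((2 : ℝ) ^ m / (Nat.factorial m : ℝ)) *
        t ^ m * Real.exp (-t ^ 2)| ≤
      (1 - τ ^ 2)⁻¹ * Real.exp ((2 / τ ^ 2 - 1) * t ^ 2) := by
  set u : ℝ := 2 * t ^ 2 / τ ^ 2 with hu
  have hu0 : 0 ≤ u := by positivity
  have hτ2 : (0:ℝ) < τ ^ 2 := by positivity
  have hτ2lt : τ ^ 2 < 1 := by nlinarith
  set F : ℕ → ℝ := fun m => |Real.sqrt ((2 : ℝ) ^ m / (Nat.factorial m : ℝ)) *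
        t ^ m * Real.exp (-t ^ 2)| with hF
  set g : ℕ → ℝ := fun m => ((τ ^ 2) ^ m + u ^ m / (Nat.factorial m : ℝ)) / 2 *
        Real.exp (-t ^ 2) with hg
  have hFg : ∀ m, F m ≤ g m := by
    intro m
    have hfac : (0:ℝ) < (Nat.factorial m : ℝ) := by
      exact_mod_cast Nat.factorial_pos m
    have habs : F m = Real.sqrt ((2 : ℝ) ^ m / (Nat.factorial m : ℝ)) * |t| ^ m *
        Real.exp (-t ^ 2) := by
      simp only [hF]
      rw [abs_mul, abs_mul, abs_pow, abs_of_nonneg (Real.sqrt_nonneg _), Real.abs_exp]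
    set A : ℝ := (τ ^ 2) ^ m
    set B : ℝ := u ^ m / (Nat.factorial m : ℝ)
    have hA0 : 0 ≤ A := by positivity
    have hB0 : 0 ≤ B := by positivity
    have hkey : Real.sqrt ((2 : ℝ) ^ m / (Nat.factorial m : ℝ)) * |t| ^ m
        = Real.sqrt (A * B) := by
      have h1 : |t| ^ m = Real.sqrt ((t ^ 2) ^ m) := by
        rw [show ((t ^ 2) ^ m : ℝ) = (|t| ^ m) ^ 2 by
          rw [← abs_pow, sq_abs]; ring, Real.sqrt_sq (by positivity)]
      rw [h1, ← Real.sqrt_mul (by positivity)]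
      congr 1
      have : A * B = (τ ^ 2 * u) ^ m / (Nat.factorial m : ℝ) := by
        rw [mul_pow]; ring
      rw [this]
      have : τ ^ 2 * u = 2 * t ^ 2 := by
        rw [hu]; field_simp
      rw [this, mul_pow]
      ring
    have hsq : Real.sqrt (A * B) ≤ (A + B) / 2 := by
      have h2 : A * B ≤ ((A + B) / 2) ^ 2 := by nlinarith [sq_nonneg (A - B)]
      have := Real.sqrt_le_sqrt h2
      rwa [Real.sqrt_sq (by positivity)] at this
    rw [habs, hkey, hg]
    exact mul_le_mul_of_nonneg_right hsq (Real.exp_pos _).le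
  have hF0 : ∀ m, 0 ≤ F m := fun m => abs_nonneg _
  have hgeo : HasSum (fun m : ℕ => (τ ^ 2) ^ m) (1 - τ ^ 2)⁻¹ :=
    hasSum_geometric_of_lt_one (by positivity) hτ2lt
  have hexp : HasSum (fun m : ℕ => u ^ m / (Nat.factorial m : ℝ)) (Real.exp u) := by
    rw [Real.exp_eq_exp_ℝ]
    exact NormedSpace.expSeries_div_hasSum_exp u
  have hgsum : HasSum g (((1 - τ ^ 2)⁻¹ + Real.exp u) / 2 * Real.exp (-t ^ 2)) :=
    ((hgeo.add hexp).div_const 2).mul_right _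
  have hFsum : Summable F := Summable.of_nonneg_of_le hF0 hFg hgsum.summable
  refine ⟨hFsum, ?_⟩
  have h1 : ∑' m, F m ≤ ((1 - τ ^ 2)⁻¹ + Real.exp u) / 2 * Real.exp (-t ^ 2) := by
    rw [← hgsum.tsum_eq]
    exact Summable.tsum_le_tsum hFg hFsum hgsum.summable
  refine h1.trans ?_
  have hτinv : (1:ℝ) ≤ (1 - τ ^ 2)⁻¹ := by
    rw [le_inv_comm₀] <;> nlinarith
  have hexpu : (1:ℝ) ≤ Real.exp u := by
    rw [← Real.exp_zero]; exact Real.exp_le_exp.mpr hu0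
  have htarget : Real.exp ((2 / τ ^ 2 - 1) * t ^ 2) = Real.exp u * Real.exp (-t ^ 2) := by
    rw [← Real.exp_add]
    congr 1
    rw [hu]; field_simp [hu]
    ring
  rw [htarget, ← mul_assoc]
  have : ((1 - τ ^ 2)⁻¹ + Real.exp u) / 2 ≤ (1 - τ ^ 2)⁻¹ * Real.exp u := by
    nlinarith
  exact mul_le_mul_of_nonneg_right this (Real.exp_pos _).le

theorem stmt13 (d : ℕ) (θ : Fin d → ℝ) (hθ : ∀ k, 0 < θ k)
    (τ : ℝ) (hτ0 : 0 < τ) (hτ1 : τ < 1) (x : Fin d → ℝ) :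
    (Summable fun n : Fin d → ℕ =>
      |∏ k, (Real.sqrt ((2 : ℝ) ^ (n k) / (Nat.factorial (n k) : ℝ)) *
        (θ k * x k) ^ (n k) * Real.exp (-(θ k) ^ 2 * (x k) ^ 2))|) ∧
    ∑' n : Fin d → ℕ,
        |∏ k, (Real.sqrt ((2 : ℝ) ^ (n k) / (Nat.factorial (n k) : ℝ)) *
          (θ k * x k) ^ (n k) * Real.exp (-(θ k) ^ 2 * (x k) ^ 2))| ≤
      ∏ k, (1 - τ ^ 2)⁻¹ * Real.exp ((2 / τ ^ 2 - 1) * (θ k) ^ 2 * (x k) ^ 2) := by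
  set f : Fin d → ℕ → ℝ := fun k m =>
    |Real.sqrt ((2 : ℝ) ^ m / (Nat.factorial m : ℝ)) *
      (θ k * x k) ^ m * Real.exp (-(θ k * x k) ^ 2)| with hf
  have hrw : ∀ k m, |Real.sqrt ((2 : ℝ) ^ m / (Nat.factorial m : ℝ)) *
      (θ k * x k) ^ m * Real.exp (-(θ k) ^ 2 * (x k) ^ 2)| = f k m := by
    intro k m
    rw [hf]
    congr 3
    rw [mul_pow]
    ring
  have habs : ∀ n : Fin d → ℕ,
      |∏ k, (Real.sqrt ((2 : ℝ) ^ (n k) / (Nat.factorial (n k) : ℝ)) *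
        (θ k * x k) ^ (n k) * Real.exp (-(θ k) ^ 2 * (x k) ^ 2))| = ∏ k, f k (n k) := by
    intro n
    rw [Finset.abs_prod]
    exact Finset.prod_congr rfl fun k _ => hrw k (n k)
  have hk := fun k => oneD (θ k * x k) τ hτ0 hτ1
  have hnn : ∀ k m, 0 ≤ f k m := fun k m => abs_nonneg _
  have hpi := hasSum_pi_prod f (fun k => ∑' m, f k m) hnn
    (fun k => (hk k).1.hasSum)
  have hSummable : Summable fun n : Fin d → ℕ => ∏ k, f k (n k) := hpi.summable
  constructor
  · exact hSummable.congr fun n => (habs n).symm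
  · have h1 : ∑' n : Fin d → ℕ,
        |∏ k, (Real.sqrt ((2 : ℝ) ^ (n k) / (Nat.factorial (n k) : ℝ)) *
          (θ k * x k) ^ (n k) * Real.exp (-(θ k) ^ 2 * (x k) ^ 2))|
        = ∏ k, ∑' m, f k m := by
      rw [← hpi.tsum_eq]
      exact tsum_congr habs
    rw [h1]
    apply Finset.prod_le_prod
    · intro k _
      exact tsum_nonneg fun m => hnn k m
    · intro k _
      refine ((hk k).2).trans ?_
      apply le_of_eq
      congr 1
      rw [mul_pow]
      ring
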